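/- For n ≥ 4, the n-wheel W_n is not (2,3)-orientable if and only if n is even, 4 does not divide n, and 3 divides 2n − 2 (equivalently, n ≡ 2 (mod 4) and n ≡ 1 (mod 3)). -/

import Mathlib

/-- A `(0,1)`-vertex labelling is friendly if the numbers of vertices labelled `0`
and labelled `1` differ by at most one. -/
def Friendly {V : Type*} (f : V → Fin 2) : Prop :=
  |(Nat.card {v : V // f v = 0} : ℤ) - (Nat.card {v : V // f v = 1} : ℤ)| ≤ 1

/-- The number of arcs of the digraph `D` whose induced label `f(head) - f(tail)`
equals `x`. -/
noncomputable def arcCount {V : Type*} (D : V → V → Prop) (f : V → Fin 2) (x : ℤ) : ℕ :=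
  Nat.card {p : V × V // D p.1 p.2 ∧ ((f p.2).val : ℤ) - ((f p.1).val : ℤ) = x}

/-- A digraph is `(2,3)`-cordial if some friendly vertex labelling induces an arc
labelling in which the numbers of arcs labelled `1`, `-1`, `0` pairwise differ by
at most one. -/
def Cordial23 {V : Type*} (D : V → V → Prop) : Prop :=
  ∃ f : V → Fin 2, Friendly f ∧
    |(arcCount D f 1 : ℤ) - (arcCount D f (-1) : ℤ)| ≤ 1 ∧
    |(arcCount D f 1 : ℤ) - (arcCount D f 0 : ℤ)| ≤ 1 ∧
    |(arcCount D f (-1) : ℤ) - (arcCount D f 0 : ℤ)| ≤ 1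

/-- A tournament: a loopless digraph with exactly one arc between every pair of
distinct vertices. -/
def IsTournament {V : Type*} (D : V → V → Prop) : Prop :=
  (∀ v : V, ¬ D v v) ∧ ∀ u v : V, u ≠ v → (D u v ↔ ¬ D v u)

/-- A (simple) digraph: loopless, with at most one arc between any two distinct
vertices (an orientation of a simple graph). -/
def IsDigraph {V : Type*} (D : V → V → Prop) : Prop :=
  (∀ v : V, ¬ D v v) ∧ ∀ u v : V, D u v → ¬ D v u

/-- An undirected simple graph is (2,3)-orientable if some orientation of it is
(2,3)-cordial. -/
def Orientable23 {V : Type*} (G : SimpleGraph V) : Prop :=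
  ∃ D : V → V → Prop, (∀ u v : V, D u v → G.Adj u v) ∧
    (∀ u v : V, G.Adj u v → (D u v ↔ ¬ D v u)) ∧ Cordial23 D


/-- The n-wheel graph: hub is vertex n-1, adjacent to all rim vertices 0,…,n-2,
which form a cycle. -/
def wheelGraph (n : ℕ) : SimpleGraph (Fin n) :=
  SimpleGraph.fromRel (fun u v => u.val = n - 1 ∨ (u.val + 1) % (n - 1) = v.val)

section AuxWheel
open Finset



lemma natCard_eq_filter {α : Type*} [Fintype α] (p : α → Prop) [DecidablePred p] :
    Nat.card {x // p x} = (univ.filter p).card := by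
  simp [Nat.card_eq_fintype_card, Fintype.card_subtype]

lemma card_subtype_add_compl {α : Type*} [Fintype α] (p : α → Prop) :
    Nat.card {x // p x} + Nat.card {x // ¬ p x} = Fintype.card α := by
  classical
  rw [natCard_eq_filter, natCard_eq_filter]
  exact Finset.card_filter_add_card_filter_not p

lemma card_subtype_congr {α : Type*} {p q : α → Prop} (h : ∀ x, p x ↔ q x) :
    Nat.card {x // p x} = Nat.card {x // q x} :=
  Nat.card_congr (Equiv.subtypeEquivRight h)

lemma card_subtype_or_disjoint {α : Type*} [Fintype α] (p q : α → Prop)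
    (hdisj : ∀ x, p x → q x → False) :
    Nat.card {x // p x ∨ q x} = Nat.card {x // p x} + Nat.card {x // q x} := by
  classical
  rw [natCard_eq_filter, natCard_eq_filter, natCard_eq_filter, filter_or]
  exact Finset.card_union_of_disjoint (by
    rw [Finset.disjoint_left]
    intro a ha hb
    exact hdisj a (mem_filter.mp ha).2 (mem_filter.mp hb).2)

lemma tri_count {N : ℕ} (h : Fin N → ℤ) (hv : ∀ j, h j = 1 ∨ h j = -1 ∨ h j = 0) :
    Nat.card {j // h j = 1} + Nat.card {j // h j = -1} + Nat.card {j // h j = 0} = N := by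
  classical
  have h1 : Nat.card {j // h j = 0} = Nat.card {j // ¬ (h j = 1 ∨ h j = -1)} := by
    apply Nat.card_congr (Equiv.subtypeEquivRight _)
    intro j
    rcases hv j with hj | hj | hj <;> rw [hj] <;> norm_num
  have h2 : Nat.card {j // h j = 1 ∨ h j = -1} =
      Nat.card {j // h j = 1} + Nat.card {j // h j = -1} := by
    apply card_subtype_or_disjoint
    intro x hx hx'; omega
  have := card_subtype_add_compl (fun j => h j = 1 ∨ h j = -1) (α := Fin N)
  simp only [Fintype.card_fin] at this
  omega

lemma sum_eq_P_sub_M {N : ℕ} (h : Fin N → ℤ) (hv : ∀ j, h j = 1 ∨ h j = -1 ∨ h j = 0) :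
    ∑ j, h j = (Nat.card {j // h j = 1} : ℤ) - (Nat.card {j // h j = -1} : ℤ) := by
  classical
  rw [natCard_eq_filter, natCard_eq_filter]
  rw [← Finset.sum_filter_add_sum_filter_not univ (fun j => h j = 1)]
  have e1 : ∑ j ∈ univ.filter (fun j => h j = 1), h j
      = ((univ.filter fun j => h j = 1).card : ℤ) := by
    rw [Finset.sum_congr rfl (fun j hj => (mem_filter.mp hj).2)]
    simp
  have e2 : ∑ j ∈ univ.filter (fun j => ¬ h j = 1), h j
      = -((univ.filter fun j => h j = -1).card : ℤ) := by
    rw [← Finset.sum_filter_add_sum_filter_not (univ.filter fun j => ¬ h j = 1)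
      (fun j => h j = -1)]
    have e3 : ∑ j ∈ (univ.filter fun j => ¬ h j = 1).filter (fun j => h j = -1), h j
        = -(((univ.filter fun j => ¬ h j = 1).filter (fun j => h j = -1)).card : ℤ) := by
      rw [Finset.sum_congr rfl (fun j hj => (mem_filter.mp hj).2)]
      simp
    have e4 : ∑ j ∈ (univ.filter fun j => ¬ h j = 1).filter (fun j => ¬ h j = -1), h j = 0 := by
      apply Finset.sum_eq_zero
      intro j hj
      simp only [mem_filter, mem_univ, true_and] at hj
      rcases hv j with hj' | hj' | hj' <;> tauto
    have e5 : (univ.filter fun j => ¬ h j = 1).filter (fun j => h j = -1)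
        = univ.filter (fun j => h j = -1) := by
      rw [Finset.filter_filter]
      apply Finset.filter_congr
      intro j _
      constructor
      · tauto
      · intro hj; exact ⟨by omega, hj⟩
    rw [e3, e4, e5]
    ring
  rw [e1, e2]
  ring



def nxtF {N : ℕ} (j : Fin N) : Fin N := ⟨(j.val + 1) % N, Nat.mod_lt _ j.pos⟩

lemma nxtF_inj {N : ℕ} : Function.Injective (nxtF (N := N)) := by
  intro a b hab
  have h := congrArg Fin.val hab
  simp only [nxtF] at h
  have ha := a.isLt; have hb := b.isLt
  apply Fin.ext
  rcases Nat.lt_or_ge (a.val + 1) N with h1 | h1 <;>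
    rcases Nat.lt_or_ge (b.val + 1) N with h2 | h2
  · rw [Nat.mod_eq_of_lt h1, Nat.mod_eq_of_lt h2] at h; omega
  · have : b.val + 1 = N := by omega
    rw [Nat.mod_eq_of_lt h1, this, Nat.mod_self] at h; omega
  · have : a.val + 1 = N := by omega
    rw [Nat.mod_eq_of_lt h2, this, Nat.mod_self] at h; omega
  · omega

lemma sum_comp_nxtF {N : ℕ} {M : Type*} [AddCommMonoid M] (g : Fin N → M) :
    ∑ j, g (nxtF j) = ∑ j, g j :=
  Fintype.sum_bijective nxtF ((Finite.injective_iff_bijective).mp nxtF_inj) _ _ (fun _ => rfl)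



lemma fin2_diff_vals : ∀ x y : Fin 2,
    ((y.val : ℤ) - (x.val : ℤ) = 1 ↔ (x = 0 ∧ y = 1)) ∧
    ((y.val : ℤ) - (x.val : ℤ) = -1 ↔ (x = 1 ∧ y = 0)) ∧
    ((y.val : ℤ) - (x.val : ℤ) = 0 ↔ x = y) ∧
    ((y.val : ℤ) - (x.val : ℤ) = 1 ∨ (y.val : ℤ) - (x.val : ℤ) = -1 ∨
      (y.val : ℤ) - (x.val : ℤ) = 0) := by decide

lemma fin2_ne_iff : ∀ x y : Fin 2, (x ≠ y) ↔ ((x = 0 ∧ y = 1) ∨ (x = 1 ∧ y = 0)) := by decide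

lemma rim_P_eq_M {N : ℕ} (g : Fin N → Fin 2) :
    Nat.card {j // g j = 0 ∧ g (nxtF j) = 1} = Nat.card {j // g j = 1 ∧ g (nxtF j) = 0} := by
  set h : Fin N → ℤ := fun j => ((g (nxtF j)).val : ℤ) - ((g j).val : ℤ) with hh
  have hv : ∀ j, h j = 1 ∨ h j = -1 ∨ h j = 0 := fun j => (fin2_diff_vals _ _).2.2.2
  have hsum : ∑ j, h j = 0 := by
    have := sum_comp_nxtF (fun j => ((g j).val : ℤ))
    simp only [hh, Finset.sum_sub_distrib]
    omega
  have := sum_eq_P_sub_M h hv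
  rw [hsum] at this
  have e1 : Nat.card {j // h j = 1} = Nat.card {j // g j = 0 ∧ g (nxtF j) = 1} :=
    card_subtype_congr (fun j => (fin2_diff_vals (g j) (g (nxtF j))).1)
  have e2 : Nat.card {j // h j = -1} = Nat.card {j // g j = 1 ∧ g (nxtF j) = 0} :=
    card_subtype_congr (fun j => (fin2_diff_vals (g j) (g (nxtF j))).2.1)
  omega



lemma wheel_adj {N : ℕ} (u v : Fin (N + 1)) :
    (wheelGraph (N + 1)).Adj u v ↔
      u ≠ v ∧ (u.val = N ∨ v.val = N ∨ (u.val + 1) % N = v.val ∨ (v.val + 1) % N = u.val) := by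
  rw [wheelGraph, SimpleGraph.fromRel_adj]
  simp only [Nat.add_sub_cancel]
  tauto

lemma adj_hub {N : ℕ} (j : Fin N) :
    (wheelGraph (N + 1)).Adj (Fin.last N) j.castSucc := by
  rw [wheel_adj]
  refine ⟨fun h => ?_, Or.inl (by simp)⟩
  · have := congrArg Fin.val h
    simp only [Fin.val_last, Fin.coe_castSucc] at this
    exact absurd this.symm (Nat.ne_of_lt j.isLt)

lemma adj_rim {N : ℕ} (hN : 3 ≤ N) (j : Fin N) :
    (wheelGraph (N + 1)).Adj j.castSucc (nxtF j).castSucc := by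
  rw [wheel_adj]
  constructor
  · intro h
    have h' := congrArg Fin.val h
    simp only [Fin.coe_castSucc, nxtF] at h'
    rcases Nat.lt_or_ge (j.val + 1) N with h1 | h1
    · rw [Nat.mod_eq_of_lt h1] at h'; omega
    · have hj : j.val + 1 = N := by omega
      rw [hj, Nat.mod_self] at h'
      omega
  · refine Or.inr (Or.inr (Or.inl ?_))
    simp [nxtF]

lemma nxtF_nxtF_ne {N : ℕ} (hN : 3 ≤ N) (j : Fin N) : nxtF (nxtF j) ≠ j := by
  intro h
  have h' := congrArg Fin.val h
  simp only [nxtF] at h'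
  have hj := j.isLt
  rcases Nat.lt_or_ge (j.val + 1) N with h1 | h1
  · rw [Nat.mod_eq_of_lt h1] at h'
    rcases Nat.lt_or_ge (j.val + 2) N with h2 | h2
    · rw [Nat.mod_eq_of_lt (by omega)] at h'; omega
    · have : j.val + 1 + 1 = N := by omega
      rw [this, Nat.mod_self] at h'; omega
  · have : j.val + 1 = N := by omega
    rw [this, Nat.mod_self] at h'
    rw [Nat.mod_eq_of_lt (by omega)] at h'
    omega



open Classical in

noncomputable def sigS {N : ℕ} (D : Fin (N+1) → Fin (N+1) → Prop)
    (f : Fin (N+1) → Fin 2) (j : Fin N) : ℤ :=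
  if D (Fin.last N) j.castSucc
  then ((f j.castSucc).val : ℤ) - ((f (Fin.last N)).val : ℤ)
  else ((f (Fin.last N)).val : ℤ) - ((f j.castSucc).val : ℤ)

open Classical in

noncomputable def sigR {N : ℕ} (D : Fin (N+1) → Fin (N+1) → Prop)
    (f : Fin (N+1) → Fin 2) (j : Fin N) : ℤ :=
  if D j.castSucc (nxtF j).castSucc
  then ((f (nxtF j).castSucc).val : ℤ) - ((f j.castSucc).val : ℤ)
  else ((f j.castSucc).val : ℤ) - ((f (nxtF j).castSucc).val : ℤ)

lemma arc_decomp {N : ℕ} (hN : 3 ≤ N) (D : Fin (N+1) → Fin (N+1) → Prop)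
    (f : Fin (N+1) → Fin 2)
    (hD1 : ∀ u v, D u v → (wheelGraph (N+1)).Adj u v)
    (hD2 : ∀ u v, (wheelGraph (N+1)).Adj u v → (D u v ↔ ¬ D v u)) (x : ℤ) :
    arcCount D f x =
      Nat.card {j : Fin N // sigS D f j = x} + Nat.card {j : Fin N // sigR D f j = x} := by
  classical
  have hcs_ne_last : ∀ j : Fin N, j.castSucc ≠ Fin.last N :=
    fun j => (Fin.castSucc_lt_last j).ne
  set F1 : Fin N → Fin (N+1) × Fin (N+1) := fun j =>
    if D (Fin.last N) j.castSucc then (Fin.last N, j.castSucc) else (j.castSucc, Fin.last N)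
    with hF1
  set F2 : Fin N → Fin (N+1) × Fin (N+1) := fun j =>
    if D j.castSucc (nxtF j).castSucc then (j.castSucc, (nxtF j).castSucc)
    else ((nxtF j).castSucc, j.castSucc) with hF2
  set S : Set (Fin (N+1) × Fin (N+1)) :=
    {p | D p.1 p.2 ∧ ((f p.2).val : ℤ) - ((f p.1).val : ℤ) = x} with hs
  set T1 : Set (Fin N) := {j | sigS D f j = x} with ht1
  set T2 : Set (Fin N) := {j | sigR D f j = x} with ht2
  -- one direction of each hub/rim edge
  have hhub : ∀ j : Fin N, ¬ D (Fin.last N) j.castSucc → D j.castSucc (Fin.last N) := by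
    intro j h
    by_contra h'
    exact h ((hD2 _ _ (adj_hub j)).mpr h')
  have hhub' : ∀ j : Fin N, D j.castSucc (Fin.last N) → ¬ D (Fin.last N) j.castSucc := by
    intro j h h'
    exact (hD2 _ _ (adj_hub j)).mp h' h
  have hrim : ∀ j : Fin N, ¬ D j.castSucc (nxtF j).castSucc →
      D (nxtF j).castSucc j.castSucc := by
    intro j h
    by_contra h'
    exact h ((hD2 _ _ (adj_rim hN j)).mpr h')
  have hrim' : ∀ j : Fin N, D (nxtF j).castSucc j.castSucc →
      ¬ D j.castSucc (nxtF j).castSucc := by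
    intro j h h'
    exact (hD2 _ _ (adj_rim hN j)).mp h' h
  have hS : S = F1 '' T1 ∪ F2 '' T2 := by
    apply Set.Subset.antisymm
    · rintro ⟨u, v⟩ ⟨hD, hdiff⟩
      have hadj := hD1 _ _ hD
      rw [wheel_adj] at hadj
      obtain ⟨hne, hcase⟩ := hadj
      by_cases hu : u.val = N
      · have hu' : u = Fin.last N := Fin.ext (by simpa using hu)
        have hv : v.val ≠ N := by
          intro h
          exact hne (Fin.ext (by simp [hu, h]))
        set j : Fin N := ⟨v.val, lt_of_le_of_ne (Nat.lt_succ_iff.mp v.isLt) hv⟩ with hj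
        have hvj : v = j.castSucc := Fin.ext rfl
        have hDj : D (Fin.last N) j.castSucc := by rw [← hu', ← hvj]; exact hD
        left
        refine ⟨j, ?_, ?_⟩
        · show sigS D f j = x
          rw [sigS, if_pos hDj, ← hvj, ← hu']
          exact hdiff
        · show F1 j = (u, v)
          rw [hF1]; simp only [if_pos hDj]; rw [← hu', ← hvj]
      · by_cases hv : v.val = N
        · have hv' : v = Fin.last N := Fin.ext (by simpa using hv)
          set j : Fin N := ⟨u.val, lt_of_le_of_ne (Nat.lt_succ_iff.mp u.isLt) hu⟩ with hj
          have huj : u = j.castSucc := Fin.ext rfl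
          have hDj : D j.castSucc (Fin.last N) := by rw [← hv', ← huj]; exact hD
          have hnDj : ¬ D (Fin.last N) j.castSucc := hhub' j hDj
          left
          refine ⟨j, ?_, ?_⟩
          · show sigS D f j = x
            rw [sigS, if_neg hnDj, ← hv', ← huj]
            exact hdiff
          · show F1 j = (u, v)
            rw [hF1]; simp only [if_neg hnDj]; rw [← hv', ← huj]
        · -- both rim
          have hcase' : (u.val + 1) % N = v.val ∨ (v.val + 1) % N = u.val := by tauto
          rcases hcase' with hc | hc
          · set j : Fin N := ⟨u.val, lt_of_le_of_ne (Nat.lt_succ_iff.mp u.isLt) hu⟩ with hj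
            have huj : u = j.castSucc := Fin.ext rfl
            have hvj : v = (nxtF j).castSucc := Fin.ext (by simp [nxtF, ← hc]; rfl)
            have hDj : D j.castSucc (nxtF j).castSucc := by rw [← huj, ← hvj]; exact hD
            right
            refine ⟨j, ?_, ?_⟩
            · show sigR D f j = x
              rw [sigR, if_pos hDj, ← hvj, ← huj]
              exact hdiff
            · show F2 j = (u, v)
              rw [hF2]; simp only [if_pos hDj]; rw [← huj, ← hvj]
          · set j : Fin N := ⟨v.val, lt_of_le_of_ne (Nat.lt_succ_iff.mp v.isLt) hv⟩ with hj
            have hvj : v = j.castSucc := Fin.ext rfl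
            have huj : u = (nxtF j).castSucc := Fin.ext (by simp [nxtF, ← hc]; rfl)
            have hDj : D (nxtF j).castSucc j.castSucc := by rw [← huj, ← hvj]; exact hD
            have hnDj : ¬ D j.castSucc (nxtF j).castSucc := hrim' j hDj
            right
            refine ⟨j, ?_, ?_⟩
            · show sigR D f j = x
              rw [sigR, if_neg hnDj, ← hvj, ← huj]
              exact hdiff
            · show F2 j = (u, v)
              rw [hF2]; simp only [if_neg hnDj]; rw [← huj, ← hvj]
    · rintro p (⟨j, hj, rfl⟩ | ⟨j, hj, rfl⟩)
      · rw [ht1, Set.mem_setOf_eq, sigS] at hj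
        rw [hF1]
        by_cases hDj : D (Fin.last N) j.castSucc
        · simp only [if_pos hDj] at hj ⊢
          exact ⟨hDj, hj⟩
        · simp only [if_neg hDj] at hj ⊢
          exact ⟨hhub j hDj, hj⟩
      · rw [ht2, Set.mem_setOf_eq, sigR] at hj
        rw [hF2]
        by_cases hDj : D j.castSucc (nxtF j).castSucc
        · simp only [if_pos hDj] at hj ⊢
          exact ⟨hDj, hj⟩
        · simp only [if_neg hDj] at hj ⊢
          exact ⟨hrim j hDj, hj⟩
  have hmem1 : ∀ j : Fin N, (F1 j).1 = Fin.last N ∨ (F1 j).2 = Fin.last N := by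
    intro j
    by_cases h : D (Fin.last N) j.castSucc <;> simp [hF1, h]
  have hmem2 : ∀ j : Fin N, (F2 j).1 ≠ Fin.last N ∧ (F2 j).2 ≠ Fin.last N := by
    intro j
    by_cases h : D j.castSucc (nxtF j).castSucc <;>
      simp [hF2, h, hcs_ne_last]
  have hdisj : Disjoint (F1 '' T1) (F2 '' T2) := by
    rw [Set.disjoint_left]
    rintro p ⟨j, _, rfl⟩ ⟨j', _, hj'⟩
    rcases hmem1 j with h | h
    · exact (hmem2 j').1 (by rw [hj']; exact h)
    · exact (hmem2 j').2 (by rw [hj']; exact h)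
  have hinj1 : Function.Injective F1 := by
    intro a b hab
    by_cases h1 : D (Fin.last N) a.castSucc <;>
      by_cases h2 : D (Fin.last N) b.castSucc <;>
      simp only [hF1, h1, h2, if_true, if_false, Prod.mk.injEq] at hab
    · exact Fin.castSucc_injective N hab.2
    · exact absurd hab.1.symm (hcs_ne_last b)
    · exact absurd hab.1 (hcs_ne_last a)
    · exact Fin.castSucc_injective N hab.1
  have hinj2 : Function.Injective F2 := by
    intro a b hab
    by_cases h1 : D a.castSucc (nxtF a).castSucc <;>
      by_cases h2 : D b.castSucc (nxtF b).castSucc <;>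
      simp only [hF2, h1, h2, if_true, if_false, Prod.mk.injEq] at hab
    · exact Fin.castSucc_injective N hab.1
    · -- (cs a, cs (nxt a)) = (cs (nxt b), cs b) : a = nxt b, nxt a = b
      have e1 : a = nxtF b := Fin.castSucc_injective N hab.1
      have e2 : nxtF a = b := Fin.castSucc_injective N hab.2
      exfalso
      exact nxtF_nxtF_ne hN b (by rw [← e1, e2])
    · have e1 : nxtF a = b := Fin.castSucc_injective N hab.1
      have e2 : a = nxtF b := Fin.castSucc_injective N hab.2
      exfalso
      exact nxtF_nxtF_ne hN b (by rw [← e2, e1])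
    · exact Fin.castSucc_injective N hab.2
  have harc : arcCount D f x = S.ncard := by
    rw [arcCount, ← Nat.card_coe_set_eq]
    rfl
  rw [harc, hS, Set.ncard_union_eq hdisj,
    Set.ncard_image_of_injective _ hinj1, Set.ncard_image_of_injective _ hinj2,
    ht1, ht2, ← Nat.card_coe_set_eq, ← Nat.card_coe_set_eq]
  rfl



def rimOne (d k i : ℕ) : Prop :=
  (i < 2*d - 2 ∧ i % 2 = 0) ∨ (2*d - 2 ≤ i ∧ i < k + d - 1)

instance rimOne.decidable (d k i : ℕ) : Decidable (rimOne d k i) := by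
  unfold rimOne; infer_instance

lemma count_val {N : ℕ} (P : ℕ → Prop) [DecidablePred P] :
    Nat.card {j : Fin N // P j.val} = ((Finset.range N).filter P).card := by
  rw [Nat.card_eq_fintype_card, Fintype.card_subtype]
  apply Finset.card_bij (fun j _ => j.val)
  · intro j hj
    simp only [mem_filter, mem_univ, true_and] at hj
    simp [j.isLt, hj]
  · intro a ha b hb hab
    exact Fin.ext hab
  · intro b hb
    simp only [mem_filter, mem_range] at hb
    exact ⟨⟨b, hb.1⟩, by simp [hb.2], rfl⟩

lemma EV (m : ℕ) : ((Finset.range (2*m)).filter (fun i => i % 2 = 0)).card = m := by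
  induction m with
  | zero => simp
  | succ m ih =>
    have : 2 * (m+1) = (2*m + 1) + 1 := by ring
    rw [this, Finset.range_add_one, Finset.range_add_one, Finset.filter_insert, Finset.filter_insert]
    rw [if_neg (by omega), if_pos (by omega)]
    rw [Finset.card_insert_of_notMem (by simp)]
    omega

lemma CC1 {N d k : ℕ} (hd : 1 ≤ d) (hdk : d ≤ k) (hkd : k + d ≤ N) :
    ((Finset.range N).filter (rimOne d k)).card = k := by
  have e0 : (Finset.range N).filter (rimOne d k) =
      ((Finset.range N).filter (fun i => i < 2*d-2 ∧ i % 2 = 0)) ∪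
      ((Finset.range N).filter (fun i => 2*d-2 ≤ i ∧ i < k+d-1)) := by
    rw [← Finset.filter_or]; rfl
  have e1 : (Finset.range N).filter (fun i => i < 2*d-2 ∧ i % 2 = 0)
      = (Finset.range (2*(d-1))).filter (fun i => i % 2 = 0) := by
    ext i
    simp only [mem_filter, mem_range]
    omega
  have e2 : (Finset.range N).filter (fun i => 2*d-2 ≤ i ∧ i < k+d-1)
      = Finset.Ico (2*d-2) (k+d-1) := by
    ext i
    simp only [mem_filter, mem_range, Finset.mem_Ico]
    omega
  have hdisj : Disjoint ((Finset.range N).filter (fun i => i < 2*d-2 ∧ i % 2 = 0))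
      ((Finset.range N).filter (fun i => 2*d-2 ≤ i ∧ i < k+d-1)) := by
    rw [Finset.disjoint_left]
    intro i hi hi'
    simp only [mem_filter, mem_range] at hi hi'
    omega
  rw [e0, Finset.card_union_of_disjoint hdisj, e1, e2, EV, Nat.card_Ico]
  omega

lemma CC2a {N d k a : ℕ} (hd : 1 ≤ d) (hdk : d ≤ k) (hkd : k + d ≤ N) (ha : a + 1 ≤ d) :
    ((Finset.range N).filter (fun i => rimOne d k i ∧ i < 2*a)).card = a := by
  have e1 : (Finset.range N).filter (fun i => rimOne d k i ∧ i < 2*a)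
      = (Finset.range (2*a)).filter (fun i => i % 2 = 0) := by
    ext i
    simp only [mem_filter, mem_range]
    simp only [rimOne]
    omega
  rw [e1, EV]

lemma CC2b {N d k a : ℕ} (hd : 1 ≤ d) (hdk : d ≤ k) (hkd : k + d ≤ N) (ha : d ≤ a)
    (hak : a ≤ k) :
    ((Finset.range N).filter (fun i => rimOne d k i ∧ i < a + d - 1)).card = a := by
  have e0 : (Finset.range N).filter (fun i => rimOne d k i ∧ i < a + d - 1) =
      ((Finset.range (2*(d-1))).filter (fun i => i % 2 = 0)) ∪ Finset.Ico (2*d-2) (a+d-1) := by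
    ext i
    simp only [mem_filter, mem_range, Finset.mem_union, Finset.mem_Ico]
    simp only [rimOne]
    omega
  have hdisj : Disjoint ((Finset.range (2*(d-1))).filter (fun i => i % 2 = 0))
      (Finset.Ico (2*d-2) (a+d-1)) := by
    rw [Finset.disjoint_left]
    intro i hi hi'
    simp only [mem_filter, mem_range] at hi
    simp only [Finset.mem_Ico] at hi'
    omega
  rw [e0, Finset.card_union_of_disjoint hdisj, EV, Nat.card_Ico]
  omega

lemma CC3 {N d k : ℕ} (hd : 1 ≤ d) (hdk : d ≤ k) (hkd : k + d ≤ N) (hN : 3 ≤ N) :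
    ((Finset.range N).filter (fun i => i < 2*d-2 ∨ i = k+d-2 ∨ i = N-1)).card = 2*d := by
  have e0 : (Finset.range N).filter (fun i => i < 2*d-2 ∨ i = k+d-2 ∨ i = N-1)
      = insert (N-1) (insert (k+d-2) (Finset.range (2*d-2))) := by
    ext i
    simp only [mem_filter, mem_range, Finset.mem_insert]
    omega
  rw [e0, Finset.card_insert_of_notMem (by simp; omega),
    Finset.card_insert_of_notMem (by simp; omega), Finset.card_range]
  omega



lemma card_ne_last {N : ℕ} (p : Fin (N+1) → Prop) (hp : ¬ p (Fin.last N)) :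
    Nat.card {v : Fin (N+1) // p v} = Nat.card {j : Fin N // p j.castSucc} := by
  have hvne : ∀ v : {v // p v}, v.1 ≠ Fin.last N := by
    intro v h
    apply hp
    rw [← h]
    exact v.2
  apply Nat.card_congr
  exact
    { toFun := fun v => ⟨(v.1).castPred (hvne v),
        by rw [Fin.castSucc_castPred]; exact v.2⟩
      invFun := fun j => ⟨j.1.castSucc, j.2⟩
      left_inv := fun v => Subtype.ext (Fin.castSucc_castPred v.1 (hvne v))
      right_inv := fun j => Subtype.ext Fin.castPred_castSucc }

lemma friendly_half {N : ℕ} (f : Fin (N+1) → Fin 2) (hf : Friendly f)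
    (heven : (N+1) % 2 = 0) :
    2 * Nat.card {j : Fin N // f j.castSucc ≠ f (Fin.last N)} = N + 1 := by
  have hne1 : ∀ x : Fin 2, ¬ x = 0 ↔ x = 1 := by decide
  have hne0 : ∀ x : Fin 2, ¬ x = 1 ↔ x = 0 := by decide
  have hx2 : ∀ x : Fin 2, x = 0 ∨ x = 1 := by decide
  have htot : Nat.card {v : Fin (N+1) // f v = 0} + Nat.card {v : Fin (N+1) // f v = 1}
      = N + 1 := by
    have h1 : Nat.card {v : Fin (N+1) // ¬ f v = 0} = Nat.card {v : Fin (N+1) // f v = 1} :=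
      card_subtype_congr (fun v => hne1 (f v))
    have := card_subtype_add_compl (fun v : Fin (N+1) => f v = 0)
    rw [h1] at this
    simpa using this
  have heq : Nat.card {j : Fin N // f j.castSucc ≠ f (Fin.last N)}
      = Nat.card {v : Fin (N+1) // f v ≠ f (Fin.last N)} :=
    (card_ne_last (fun v => f v ≠ f (Fin.last N)) (by simp)).symm
  rw [Friendly, abs_le] at hf
  by_cases h0 : f (Fin.last N) = 0
  · have e : Nat.card {v : Fin (N+1) // f v ≠ f (Fin.last N)}
        = Nat.card {v : Fin (N+1) // f v = 1} :=
      card_subtype_congr (fun v => by rw [h0]; exact hne1 (f v))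
    rw [heq, e]
    omega
  · have h1 : f (Fin.last N) = 1 := by
      rcases hx2 (f (Fin.last N)) with h | h
      · exact absurd h h0
      · exact h
    have e : Nat.card {v : Fin (N+1) // f v ≠ f (Fin.last N)}
        = Nat.card {v : Fin (N+1) // f v = 0} :=
      card_subtype_congr (fun v => by rw [h1]; exact hne0 (f v))
    rw [heq, e]
    omega

open Classical in

open Classical in

lemma sigS_vals {N : ℕ} (D : Fin (N+1) → Fin (N+1) → Prop) (f : Fin (N+1) → Fin 2)
    (j : Fin N) : sigS D f j = 1 ∨ sigS D f j = -1 ∨ sigS D f j = 0 := by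
  rw [sigS]
  split
  · exact (fin2_diff_vals _ _).2.2.2
  · exact (fin2_diff_vals _ _).2.2.2

lemma sigR_vals {N : ℕ} (D : Fin (N+1) → Fin (N+1) → Prop) (f : Fin (N+1) → Fin 2)
    (j : Fin N) : sigR D f j = 1 ∨ sigR D f j = -1 ∨ sigR D f j = 0 := by
  rw [sigR]
  split
  · exact (fin2_diff_vals _ _).2.2.2
  · exact (fin2_diff_vals _ _).2.2.2

lemma sigS_zero_iff {N : ℕ} (D : Fin (N+1) → Fin (N+1) → Prop) (f : Fin (N+1) → Fin 2)
    (j : Fin N) : sigS D f j = 0 ↔ f j.castSucc = f (Fin.last N) := by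
  rw [sigS]
  split
  · rw [(fin2_diff_vals _ _).2.2.1]
    exact eq_comm
  · exact (fin2_diff_vals _ _).2.2.1

lemma sigR_zero_iff {N : ℕ} (D : Fin (N+1) → Fin (N+1) → Prop) (f : Fin (N+1) → Fin 2)
    (j : Fin N) : sigR D f j = 0 ↔ f j.castSucc = f (nxtF j).castSucc := by
  rw [sigR]
  split
  · exact (fin2_diff_vals _ _).2.2.1
  · rw [(fin2_diff_vals _ _).2.2.1]
    exact eq_comm

lemma wheel_imposs {N : ℕ} (hN : 3 ≤ N) (h10 : (N+1) % 12 = 10) :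
    ¬ Orientable23 (wheelGraph (N+1)) := by
  rintro ⟨D, hD1, hD2, f, hf, hb1, hb2, hb3⟩
  -- spoke counts
  set k := Nat.card {j : Fin N // f j.castSucc ≠ f (Fin.last N)} with hk
  have hkN : 2 * k = N + 1 := friendly_half f hf (by omega)
  have hS0 : Nat.card {j : Fin N // sigS D f j = 0} + k = N := by
    have e : Nat.card {j : Fin N // sigS D f j = 0}
        = Nat.card {j : Fin N // f j.castSucc = f (Fin.last N)} :=
      card_subtype_congr (sigS_zero_iff D f)
    have e2 : k = Nat.card {j : Fin N // ¬ f j.castSucc = f (Fin.last N)} := rfl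
    rw [e, e2]
    have := card_subtype_add_compl (fun j : Fin N => f j.castSucc = f (Fin.last N))
    simpa using this
  -- rim counts
  set g : Fin N → Fin 2 := fun j => f j.castSucc with hg
  set P := Nat.card {j : Fin N // g j = 0 ∧ g (nxtF j) = 1} with hP
  set M := Nat.card {j : Fin N // g j = 1 ∧ g (nxtF j) = 0} with hM
  have hPM : P = M := rim_P_eq_M g
  set c := Nat.card {j : Fin N // g j ≠ g (nxtF j)} with hc
  have hcPM : c = P + M := by
    rw [hc, hP, hM, card_subtype_congr (fun j => fin2_ne_iff (g j) (g (nxtF j)))]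
    apply card_subtype_or_disjoint
    rintro j ⟨h1, -⟩ ⟨h2, -⟩
    rw [h1] at h2
    exact absurd h2 (by decide)
  have hR0 : Nat.card {j : Fin N // sigR D f j = 0} + c = N := by
    have e : Nat.card {j : Fin N // sigR D f j = 0}
        = Nat.card {j : Fin N // g j = g (nxtF j)} :=
      card_subtype_congr (sigR_zero_iff D f)
    rw [e, hc]
    have := card_subtype_add_compl (fun j : Fin N => g j = g (nxtF j))
    simpa using this
  have htriS := tri_count (sigS D f) (sigS_vals D f)
  have htriR := tri_count (sigR D f) (sigR_vals D f)
  have hA1 := arc_decomp hN D f hD1 hD2 1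
  have hAm := arc_decomp hN D f hD1 hD2 (-1)
  have hA0 := arc_decomp hN D f hD1 hD2 0
  rw [abs_le] at hb1 hb2 hb3
  simp only [hA1, hAm, hA0] at hb1 hb2 hb3
  push_cast at hb1 hb2 hb3
  omega



open Classical in

open Classical in

lemma mod_succ_antisym {N : ℕ} (hN : 3 ≤ N) {x y : ℕ} (hx : x < N) (hy : y < N)
    (h1 : (x+1) % N = y) (h2 : (y+1) % N = x) : False := by
  rcases Nat.lt_or_ge (x+1) N with h | h
  · rw [Nat.mod_eq_of_lt h] at h1
    rcases Nat.lt_or_ge (y+1) N with h' | h'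
    · rw [Nat.mod_eq_of_lt h'] at h2; omega
    · have he : y + 1 = N := by omega
      rw [he, Nat.mod_self] at h2; omega
  · have he : x + 1 = N := by omega
    rw [he, Nat.mod_self] at h1
    rw [← h1] at h2
    rw [Nat.mod_eq_of_lt (by omega)] at h2
    omega

lemma params (N : ℕ) (hN : 3 ≤ N) (hmod : (N+1) % 12 ≠ 10) :
    ∃ k d a : ℕ, 1 ≤ d ∧ d ≤ k ∧ k + d ≤ N ∧ a ≤ k ∧
      N ≤ 2*k ∧ 2*k ≤ N+2 ∧ 2*a ≤ k ∧ k ≤ 2*a+1 ∧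
      4*N ≤ 3*k+6*d+2 ∧ 3*k+6*d ≤ 4*N+2 := by
  obtain ⟨q, r, hqr, hr⟩ : ∃ q r, N + 1 = 12*q + r ∧ r < 12 :=
    ⟨(N+1)/12, (N+1)%12, by omega⟩
  interval_cases r
  · exact ⟨6*q, 5*q-1, 3*q, by omega⟩
  · exact ⟨6*q, 5*q, 3*q, by omega⟩
  · exact ⟨6*q+1, 5*q, 3*q, by omega⟩
  · exact ⟨6*q+1, 5*q+1, 3*q, by omega⟩
  · exact ⟨6*q+2, 5*q+1, 3*q+1, by omega⟩
  · exact ⟨6*q+2, 5*q+2, 3*q+1, by omega⟩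
  · exact ⟨6*q+3, 5*q+2, 3*q+1, by omega⟩
  · exact ⟨6*q+4, 5*q+2, 3*q+2, by omega⟩
  · exact ⟨6*q+4, 5*q+3, 3*q+2, by omega⟩
  · exact ⟨6*q+4, 5*q+3, 3*q+2, by omega⟩
  · exact absurd (by omega : (N+1) % 12 = 10) hmod
  · exact ⟨6*q+5, 5*q+4, 3*q+2, by omega⟩

def consF (N d k : ℕ) : Fin (N+1) → Fin 2 := fun v => if rimOne d k v.val then 1 else 0

def consD (N d k θ : ℕ) : Fin (N+1) → Fin (N+1) → Prop := fun u v =>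
  (wheelGraph (N+1)).Adj u v ∧
    (if u.val = N then (¬ rimOne d k v.val ∨ v.val < θ)
     else if v.val = N then ¬(¬ rimOne d k u.val ∨ u.val < θ)
     else (u.val + 1) % N = v.val)

lemma wheel_construct {N : ℕ} (hN : 3 ≤ N) (hmod : (N+1) % 12 ≠ 10) :
    Orientable23 (wheelGraph (N+1)) := by
  classical
  obtain ⟨k, d, a, hd1, hdk, hkdN, hak, hk1, hk2, ha1, ha2, hlo, hhi⟩ := params N hN hmod
  set θ : ℕ := if a + 1 ≤ d then 2*a else a + d - 1 with hθ
  set f : Fin (N+1) → Fin 2 := consF N d k with hf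
  set D : Fin (N+1) → Fin (N+1) → Prop := consD N d k θ with hD
  have hrimN : ¬ rimOne d k N := by rw [rimOne]; omega
  have hfhub : f (Fin.last N) = 0 := by
    rw [hf, consF]
    simp only [Fin.val_last]
    rw [if_neg hrimN]
  have hfcs : ∀ j : Fin N, f j.castSucc = if rimOne d k j.val then 1 else 0 := fun j => rfl
  have hD1 : ∀ u v, D u v → (wheelGraph (N+1)).Adj u v := fun u v h => h.1
  have hD2 : ∀ u v, (wheelGraph (N+1)).Adj u v → (D u v ↔ ¬ D v u) := by
    intro u v hadj
    have hne : u.val ≠ v.val := fun h => hadj.ne (Fin.ext h)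
    have hadj' := hadj.symm
    by_cases hu : u.val = N <;> by_cases hv : v.val = N
    · omega
    · rw [hD]
      simp only [consD]
      simp [hu, hv, hadj, hadj']
      try tauto
    · rw [hD]
      simp only [consD]
      simp [hu, hv, hadj, hadj']
      try tauto
    · rw [hD]
      simp only [consD]
      simp only [if_neg hu, if_neg hv]
      simp only [hadj, hadj', true_and]
      have hux : u.val < N := by have := u.isLt; omega
      have hvx : v.val < N := by have := v.isLt; omega
      constructor
      · intro h1 h2
        exact mod_succ_antisym hN hux hvx h1 h2
      · intro hno
        have hcases := (wheel_adj u v).mp hadj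
        have hone : (u.val + 1) % N = v.val ∨ (v.val + 1) % N = u.val := by tauto
        rcases hone with h | h
        · exact h
        · exact absurd h hno
  -- characterization of D on spokes and on the rim
  have hDhub : ∀ j : Fin N, D (Fin.last N) j.castSucc ↔ (¬ rimOne d k j.val ∨ j.val < θ) := by
    intro j
    rw [hD]
    simp only [consD]
    simp [adj_hub j]
  have hDrim : ∀ j : Fin N, D j.castSucc (nxtF j).castSucc := by
    intro j
    rw [hD]
    refine ⟨adj_rim hN j, ?_⟩
    rw [if_neg (by have := j.isLt; simp only [Fin.coe_castSucc]; omega :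
      ¬ (j.castSucc).val = N)]
    rw [if_neg (by have := (nxtF j).isLt; simp only [Fin.coe_castSucc]; omega :
      ¬ ((nxtF j).castSucc).val = N)]
    rfl
  -- spoke sigma values
  have keyS : ∀ j : Fin N,
      (sigS D f j = 1 ↔ (rimOne d k j.val ∧ j.val < θ)) ∧
      (sigS D f j = -1 ↔ (rimOne d k j.val ∧ ¬ j.val < θ)) ∧
      (sigS D f j = 0 ↔ ¬ rimOne d k j.val) := by
    intro j
    by_cases hr : rimOne d k j.val <;>
      by_cases hw : (¬ rimOne d k j.val ∨ j.val < θ)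
    · have hDj : D (Fin.last N) j.castSucc := (hDhub j).mpr hw
      have hθj : j.val < θ := by tauto
      have hval : sigS D f j = 1 := by
        rw [sigS, if_pos hDj, hfhub, hfcs j, if_pos hr]
        decide
      rw [hval]
      exact ⟨⟨fun _ => ⟨hr, hθj⟩, fun _ => rfl⟩,
        ⟨fun h => absurd h (by decide), fun h => absurd hθj h.2⟩,
        ⟨fun h => absurd h (by decide), fun h => absurd hr h⟩⟩
    · have hDj : ¬ D (Fin.last N) j.castSucc := fun h => hw ((hDhub j).mp h)
      have hθj : ¬ j.val < θ := by tauto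
      have hval : sigS D f j = -1 := by
        rw [sigS, if_neg hDj, hfhub, hfcs j, if_pos hr]
        decide
      rw [hval]
      exact ⟨⟨fun h => absurd h (by decide), fun h => absurd h.2 hθj⟩,
        ⟨fun _ => ⟨hr, hθj⟩, fun _ => rfl⟩,
        ⟨fun h => absurd h (by decide), fun h => absurd hr h⟩⟩
    · have hDj : D (Fin.last N) j.castSucc := (hDhub j).mpr hw
      have hval : sigS D f j = 0 := by
        rw [sigS, if_pos hDj, hfhub, hfcs j, if_neg hr]
        decide
      rw [hval]
      exact ⟨⟨fun h => absurd h (by decide), fun h => absurd h.1 hr⟩,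
        ⟨fun h => absurd h (by decide), fun h => absurd h.1 hr⟩,
        ⟨fun _ => hr, fun _ => rfl⟩⟩
    · exact absurd (Or.inl hr) hw
  have hNS1 : Nat.card {j : Fin N // sigS D f j = 1} = a := by
    rw [card_subtype_congr (fun j => (keyS j).1)]
    rw [count_val (fun i => rimOne d k i ∧ i < θ)]
    by_cases hθb : a + 1 ≤ d
    · rw [hθ, if_pos hθb]
      exact CC2a hd1 hdk hkdN hθb
    · rw [hθ, if_neg hθb]
      exact CC2b hd1 hdk hkdN (by omega) hak
  have hNSsum : Nat.card {j : Fin N // sigS D f j = 1}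
      + Nat.card {j : Fin N // sigS D f j = -1} = k := by
    rw [card_subtype_congr (fun j => (keyS j).1),
      card_subtype_congr (fun j => (keyS j).2.1)]
    rw [count_val (fun i => rimOne d k i ∧ i < θ),
      count_val (fun i => rimOne d k i ∧ ¬ i < θ)]
    have e1 : (Finset.range N).filter (fun i => rimOne d k i ∧ i < θ)
        = ((Finset.range N).filter (rimOne d k)).filter (fun i => i < θ) := by
      rw [Finset.filter_filter]
    have e2 : (Finset.range N).filter (fun i => rimOne d k i ∧ ¬ i < θ)
        = ((Finset.range N).filter (rimOne d k)).filter (fun i => ¬ i < θ) := by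
      rw [Finset.filter_filter]
    rw [e1, e2, Finset.card_filter_add_card_filter_not, CC1 hd1 hdk hkdN]
  have hNS0 : Nat.card {j : Fin N // sigS D f j = 0} + k = N := by
    rw [card_subtype_congr (fun j => (keyS j).2.2)]
    have hcompl := card_subtype_add_compl (fun j : Fin N => rimOne d k j.val)
    have e1 : Nat.card {j : Fin N // rimOne d k j.val} = k := by
      rw [count_val (fun i => rimOne d k i)]
      exact CC1 hd1 hdk hkdN
    rw [e1] at hcompl
    simp only [Fintype.card_fin] at hcompl
    omega
  -- rim sigma values
  set g : Fin N → Fin 2 := fun j => f j.castSucc with hg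
  have keyR : ∀ j : Fin N, sigR D f j = ((g (nxtF j)).val : ℤ) - ((g j).val : ℤ) := by
    intro j
    rw [sigR, if_pos (hDrim j)]
  have hNR1 : Nat.card {j : Fin N // sigR D f j = 1}
      = Nat.card {j : Fin N // g j = 0 ∧ g (nxtF j) = 1} := by
    apply card_subtype_congr
    intro j
    rw [keyR j]
    exact (fin2_diff_vals _ _).1
  have hNRm : Nat.card {j : Fin N // sigR D f j = -1}
      = Nat.card {j : Fin N // g j = 1 ∧ g (nxtF j) = 0} := by
    apply card_subtype_congr
    intro j
    rw [keyR j]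
    exact (fin2_diff_vals _ _).2.1
  have hPM : Nat.card {j : Fin N // g j = 0 ∧ g (nxtF j) = 1}
      = Nat.card {j : Fin N // g j = 1 ∧ g (nxtF j) = 0} := rim_P_eq_M g
  have hone0 : (1 : Fin 2) ≠ 0 := by decide
  have hzero1 : (0 : Fin 2) ≠ 1 := by decide
  have hchg : ∀ j : Fin N, (g j ≠ g (nxtF j)) ↔
      (j.val < 2*d-2 ∨ j.val = k+d-2 ∨ j.val = N-1) := by
    intro j
    have hjlt := j.isLt
    have hgj : g j = if rimOne d k j.val then 1 else 0 := rfl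
    rcases Nat.lt_or_ge j.val (N-1) with hlt | hge
    · have hnv : (nxtF j).val = j.val + 1 := by
        show (j.val + 1) % N = j.val + 1
        exact Nat.mod_eq_of_lt (by omega)
      have hgn : g (nxtF j) = if rimOne d k (j.val + 1) then 1 else 0 := by
        show f (nxtF j).castSucc = _
        rw [hf, consF]
        simp only [Fin.coe_castSucc, hnv]
      by_cases r1 : rimOne d k j.val <;> by_cases r2 : rimOne d k (j.val + 1)
      · rw [hgj, hgn, if_pos r1, if_pos r2]
        simp only [ne_eq, not_true_eq_false, false_iff]
        simp only [rimOne] at r1 r2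
        omega
      · rw [hgj, hgn, if_pos r1, if_neg r2]
        simp only [ne_eq, hone0, not_false_eq_true, true_iff]
        simp only [rimOne] at r1 r2
        omega
      · rw [hgj, hgn, if_neg r1, if_pos r2]
        simp only [ne_eq, hzero1, not_false_eq_true, true_iff]
        simp only [rimOne] at r1 r2
        omega
      · rw [hgj, hgn, if_neg r1, if_neg r2]
        simp only [ne_eq, not_true_eq_false, false_iff]
        simp only [rimOne] at r1 r2
        omega
    · have hjv : j.val = N - 1 := by omega
      have hnv : (nxtF j).val = 0 := by
        show (j.val + 1) % N = 0
        have : j.val + 1 = N := by omega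
        rw [this, Nat.mod_self]
      have hgn : g (nxtF j) = if rimOne d k 0 then 1 else 0 := by
        show f (nxtF j).castSucc = _
        rw [hf, consF]
        simp only [Fin.coe_castSucc, hnv]
      have hr0 : rimOne d k 0 := by rw [rimOne]; omega
      have hrj : ¬ rimOne d k j.val := by rw [rimOne]; omega
      rw [hgj, hgn, if_neg hrj, if_pos hr0]
      simp only [ne_eq, hzero1, not_false_eq_true, true_iff]
      omega
  have hNchg : Nat.card {j : Fin N // g j ≠ g (nxtF j)} = 2*d := by
    rw [card_subtype_congr hchg,
      count_val (fun i => i < 2*d-2 ∨ i = k+d-2 ∨ i = N-1)]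
    exact CC3 hd1 hdk hkdN hN
  have hsplit : Nat.card {j : Fin N // g j ≠ g (nxtF j)}
      = Nat.card {j : Fin N // g j = 0 ∧ g (nxtF j) = 1}
        + Nat.card {j : Fin N // g j = 1 ∧ g (nxtF j) = 0} := by
    rw [card_subtype_congr (fun j => fin2_ne_iff (g j) (g (nxtF j)))]
    apply card_subtype_or_disjoint
    rintro j ⟨h1, -⟩ ⟨h2, -⟩
    rw [h1] at h2
    exact absurd h2 (by decide)
  have hR0sum : Nat.card {j : Fin N // sigR D f j = 0}
      + Nat.card {j : Fin N // g j ≠ g (nxtF j)} = N := by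
    have e : Nat.card {j : Fin N // sigR D f j = 0}
        = Nat.card {j : Fin N // g j = g (nxtF j)} := by
      apply card_subtype_congr
      intro j
      rw [keyR j]
      exact (fin2_diff_vals _ _).2.2.1
    rw [e]
    have := card_subtype_add_compl (fun j : Fin N => g j = g (nxtF j))
    simpa using this
  -- friendliness
  have hcount1 : Nat.card {v : Fin (N+1) // f v = 1} = k := by
    have e : ∀ v : Fin (N+1), (f v = 1) ↔ rimOne d k v.val := by
      intro v
      rw [hf, consF]
      by_cases h : rimOne d k v.val <;> simp [h]
    rw [card_subtype_congr e, count_val (rimOne d k)]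
    rw [Finset.range_add_one, Finset.filter_insert, if_neg hrimN]
    exact CC1 hd1 hdk hkdN
  have hcount0 : Nat.card {v : Fin (N+1) // f v = 0} + k = N + 1 := by
    have e : ∀ v : Fin (N+1), (f v = 0) ↔ ¬ f v = 1 := by
      intro v
      have : ∀ x : Fin 2, (x = 0 ↔ ¬ x = 1) := by decide
      exact this (f v)
    rw [card_subtype_congr e, ← hcount1]
    have := card_subtype_add_compl (fun v : Fin (N+1) => f v = 1)
    simp only [Fintype.card_fin] at this
    omega
  have hfriendly : Friendly f := by
    rw [Friendly, abs_le]
    constructor <;> omega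
  refine ⟨D, hD1, hD2, f, hfriendly, ?_, ?_, ?_⟩
  · rw [arc_decomp hN D f hD1 hD2 1, arc_decomp hN D f hD1 hD2 (-1), abs_le]
    constructor <;> omega
  · rw [arc_decomp hN D f hD1 hD2 1, arc_decomp hN D f hD1 hD2 0, abs_le]
    constructor <;> omega
  · rw [arc_decomp hN D f hD1 hD2 (-1), arc_decomp hN D f hD1 hD2 0, abs_le]
    constructor <;> omega

end AuxWheel

/-- For n ≥ 4, the n-wheel is not (2,3)-orientable if and only if n is even, 4 does
not divide n, and 3 divides 2n - 2. -/
theorem wheel_not_orientable_iff (n : ℕ) (hn : 4 ≤ n) :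
    ¬ Orientable23 (wheelGraph n) ↔ (Even n ∧ ¬ (4 ∣ n) ∧ 3 ∣ (2 * n - 2)) := by
  obtain ⟨N, rfl⟩ : ∃ N, n = N + 1 := ⟨n - 1, by omega⟩
  have hN : 3 ≤ N := by omega
  have hiff : (Even (N+1) ∧ ¬ (4 ∣ (N+1)) ∧ 3 ∣ (2*(N+1) - 2)) ↔ (N+1) % 12 = 10 := by
    rw [Nat.even_iff]
    omega
  rw [hiff]
  constructor
  · intro h
    by_contra hmod
    exact h (wheel_construct hN hmod)
  · intro h
    exact wheel_imposs hN h
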